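/- Fix vectors x, z ∈ ℝⁿ and a probability measure μ on the unit sphere S^{n−1}, and let P = P_μ be the generalized Kaczmarz projection with respect to μ. Then E‖Pz − x‖₂² ≤ [1 − λ_min(E[aaᵀ] − 4·E[aaᵀ·1_{W_{x,z}}(a)])]·‖z − x‖₂², where a ∼ μ and λ_min denotes the smallest eigenvalue of a symmetric matrix. -/

import Mathlib

open MeasureTheory ProbabilityTheory
open scoped RealInnerProductSpace ENNReal BigOperators

noncomputable section

/-- `ℝⁿ` with the Euclidean structure. -/
abbrev Euc (n : ℕ) := EuclideanSpace ℝ (Fin n)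

/-- The sign function used in the paper: `sgn t = 1` if `t ≥ 0` and `-1` otherwise. -/
def sgn (t : ℝ) : ℝ := if 0 ≤ t then 1 else -1

/-- One (generalized) Kaczmarz step for phase retrieval with signal `x`,
measurement vector `a`, applied to the current iterate `z`:
`Pz = z + (sign(⟨a,z⟩)·|⟨a,x⟩| − ⟨a,z⟩) a`. -/
def kacStep {n : ℕ} (x a z : Euc n) : Euc n :=
  z + (sgn ⟪a, z⟫ * |⟪a, x⟫| - ⟪a, z⟫) • a

/-- The randomized Kaczmarz iterates `X_k = P_k ⋯ P_1 x₀`, where step `k+1`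
uses the measurement vector `a k`. -/
def kacIter {n : ℕ} (x : Euc n) (a : ℕ → Euc n) (x0 : Euc n) : ℕ → Euc n
  | 0 => x0
  | k + 1 => kacStep x (a k) (kacIter x a x0 k)

/-- The spherical wedge `W_{x,z}`: points of the unit sphere where the signs of
`⟨v,x⟩` and `⟨v,z⟩` disagree. -/
def wedge {n : ℕ} (x z : Euc n) : Set (Euc n) :=
  {v | v ∈ Metric.sphere (0 : Euc n) 1 ∧ sgn ⟪v, x⟫ ≠ sgn ⟪v, z⟫}

/-- The matrix `E_{a∼μ}[a aᵀ]`. -/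
def covMat {n : ℕ} (μ : Measure (Euc n)) : Matrix (Fin n) (Fin n) ℝ :=
  Matrix.of fun i j => ∫ a, a i * a j ∂μ

/-- The matrix `E_{a∼μ}[a aᵀ 1_W(a)]`. -/
def covMatOn {n : ℕ} (μ : Measure (Euc n)) (W : Set (Euc n)) : Matrix (Fin n) (Fin n) ℝ :=
  Matrix.of fun i j => ∫ a in W, a i * a j ∂μ

/-- The quadratic form `vᵀ M v` of a matrix. -/
def quadForm {n : ℕ} (M : Matrix (Fin n) (Fin n) ℝ) (v : Euc n) : ℝ :=
  ∑ i, ∑ j, v i * M i j * v j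

/-- The smallest eigenvalue of a symmetric matrix, via the Rayleigh quotient
characterization `λ_min(M) = inf_{‖v‖=1} vᵀMv`. -/
def lamMin {n : ℕ} (M : Matrix (Fin n) (Fin n) ℝ) : ℝ :=
  ⨅ v : {v : Euc n // ‖v‖ = 1}, quadForm M (v : Euc n)

/-- The largest eigenvalue of a symmetric matrix, via the Rayleigh quotient
characterization `λ_max(M) = sup_{‖v‖=1} vᵀMv`. -/
def lamMax {n : ℕ} (M : Matrix (Fin n) (Fin n) ℝ) : ℝ :=
  ⨆ v : {v : Euc n // ‖v‖ = 1}, quadForm M (v : Euc n)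

/-- The uniform probability measure on the unit sphere `S^{n-1} ⊂ ℝⁿ`:
the normalized `(n-1)`-dimensional Hausdorff measure on the sphere. -/
def sphereUniform (n : ℕ) : Measure (Euc n) :=
  (μH[(n : ℝ) - 1] (Metric.sphere (0 : Euc n) 1))⁻¹ •
    (μH[(n : ℝ) - 1]).restrict (Metric.sphere (0 : Euc n) 1)

/-- The `ACW(θ, α)` (anti-concentration on wedges) condition: for every wedge `W`
of angle less than `θ`, `λ_min(E[aaᵀ] − 4 E[aaᵀ 1_W(a)]) ≥ α/n`. -/
def ACW {n : ℕ} (μ : Measure (Euc n)) (θ α : ℝ) : Prop :=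
  ∀ x z : Euc n, x ≠ 0 → z ≠ 0 → InnerProductGeometry.angle x z < θ →
    lamMin (covMat μ - (4 : ℝ) • covMatOn μ (wedge x z)) ≥ α / n

/-- The hitting time `τ = min{k : X_k ∉ B}` (equal to `⊤ = ∞` if the trajectory
never leaves `B`). -/
def hitTime {n : ℕ} (B : Set (Euc n)) (X : ℕ → Euc n) : ℕ∞ :=
  ⨅ j ∈ {j : ℕ | X j ∉ B}, (j : ℕ∞)

/-- The stopped iterate `X_{τ ∧ k}` where `τ = hitTime B`. -/
def stoppedIter {n : ℕ} (x : Euc n) (a : ℕ → Euc n) (x0 : Euc n) (B : Set (Euc n)) (k : ℕ) :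
    Euc n :=
  kacIter x a x0 (min (hitTime B (kacIter x a x0)) (k : ℕ∞)).toNat

/-- The filtration `(F_k)` where `F_k = σ(a_0, …, a_{k-1})` is generated by the
first `k` measurement vectors. -/
def measFiltration {Ω : Type*} {mΩ : MeasurableSpace Ω} {n : ℕ}
    (A : ℕ → Ω → Euc n) (hA : ∀ i, Measurable (A i)) : Filtration ℕ mΩ where
  seq k := ⨆ j ∈ Set.Iio k, MeasurableSpace.comap (A j) inferInstance
  mono' _ _ hij := biSup_mono fun _ ha => lt_of_lt_of_le ha hij
  le' _ := iSup₂_le fun j _ => measurable_iff_comap_le.mp (hA j)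

/-- The set `S_τ` of `{0,1}`-vectors of length `m` with at most `τ·m` ones. -/
def selVecs (m : ℕ) (τ : ℝ) : Set (Fin m → ℝ) :=
  {s | (∀ i, s i = 0 ∨ s i = 1) ∧ ∑ i, s i ≤ τ * m}

/-- The Euclidean unit ball `B₂ⁿ ⊂ ℝⁿ`. -/
def unitBall (n : ℕ) : Set (Euc n) :=
  {v | ‖v‖ ≤ 1}

/-- A process `(Y_t)_{t ∈ T}` has *mixed tail increments* with respect to a pair of
metrics `(d₁, d₂)`: there are constants `c, C > 0` with
`P(|Y_s − Y_t| ≥ c(√u d₂(s,t) + u d₁(s,t))) ≤ C e^{−u}` for all `s,t,u`. -/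
def HasMixedTailIncrements {Ω T : Type*} [MeasurableSpace Ω] (P : Measure Ω)
    (Y : T → Ω → ℝ) (d₁ d₂ : T → T → ℝ) : Prop :=
  ∃ c C : ℝ, 0 < c ∧ 0 < C ∧ ∀ s t : T, ∀ u : ℝ, 0 < u →
    P {ω | c * (Real.sqrt u * d₂ s t + u * d₁ s t) ≤ |Y s ω - Y t ω|} ≤
      ENNReal.ofReal (C * Real.exp (-u))

/-- An admissible sequence of subsets: `|T₀| = 1` and `|T_k| ≤ 2^(2^k)` for `k ≥ 1`
(the sets are taken nonempty so that distances to them are meaningful). -/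
def Admissible {T : Type*} (Ts : ℕ → Finset T) : Prop :=
  (Ts 0).card = 1 ∧ (∀ k, 1 ≤ k → (Ts k).card ≤ 2 ^ 2 ^ k) ∧ ∀ k, (Ts k).Nonempty

/-- The distance from a point to a finite set, for an abstract metric `d`. -/
def distToFinset {T : Type*} (d : T → T → ℝ) (t : T) (S : Finset T) : ℝ :=
  sInf ((fun u => d t u) '' (S : Set T))

/-- Talagrand's `γ_α` functional of a metric space `(T, d)` (here `T` is a type and
`d` an abstract metric on it): `γ_α(T,d) = inf_{(T_k)} sup_t Σ_k 2^{k/α} d(t, T_k)`,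
the infimum being over admissible sequences. -/
def gammaFunctional {T : Type*} (α : ℝ) (d : T → T → ℝ) : ℝ :=
  ⨅ Ts : {Ts : ℕ → Finset T // Admissible Ts},
    ⨆ t : T, ∑' k : ℕ, (2 : ℝ) ^ ((k : ℝ) / α) * distToFinset d t ((Ts : ℕ → Finset T) k)

end

noncomputable section Aux
variable {n : ℕ}

lemma inner_euc (a e : Euc n) : ⟪a, e⟫ = ∑ i, a i * e i := by
  simp [PiLp.inner_apply, RCLike.inner_apply]
  exact Finset.sum_congr rfl fun i _ => mul_comm _ _

lemma abs_apply_le_norm (v : Euc n) (i : Fin n) : |v i| ≤ ‖v‖ := by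
  have h : v i ^ 2 ≤ ‖v‖ ^ 2 := by
    rw [EuclideanSpace.norm_eq, Real.sq_sqrt (by positivity)]
    have := Finset.single_le_sum (f := fun j => ‖v j‖ ^ 2)
      (fun j _ => sq_nonneg _) (Finset.mem_univ i)
    simpa [Real.norm_eq_abs, sq_abs] using this
  have h2 := Real.sqrt_le_sqrt h
  rwa [Real.sqrt_sq_eq_abs, Real.sqrt_sq (norm_nonneg v)] at h2

lemma quadForm_sub_smul (A B : Matrix (Fin n) (Fin n) ℝ) (c : ℝ) (v : Euc n) :
    quadForm (A - c • B) v = quadForm A v - c * quadForm B v := by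
  unfold quadForm
  simp only [Matrix.sub_apply, Matrix.smul_apply, smul_eq_mul]
  rw [Finset.mul_sum, ← Finset.sum_sub_distrib]
  refine Finset.sum_congr rfl fun i _ => ?_
  rw [Finset.mul_sum, ← Finset.sum_sub_distrib]
  exact Finset.sum_congr rfl fun j _ => by ring

lemma quadForm_smul (M : Matrix (Fin n) (Fin n) ℝ) (c : ℝ) (v : Euc n) :
    quadForm M (c • v) = c ^ 2 * quadForm M v := by
  unfold quadForm
  simp only [PiLp.smul_apply, smul_eq_mul]
  rw [Finset.mul_sum]
  refine Finset.sum_congr rfl fun i _ => ?_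
  rw [Finset.mul_sum]
  exact Finset.sum_congr rfl fun j _ => by ring

lemma lamMin_le (M : Matrix (Fin n) (Fin n) ℝ) (u : Euc n) (hu : ‖u‖ = 1) :
    lamMin M ≤ quadForm M u := by
  have hbdd : BddBelow (Set.range fun v : {v : Euc n // ‖v‖ = 1} =>
      quadForm M (v : Euc n)) := by
    refine ⟨-(∑ i, ∑ j, |M i j|), ?_⟩
    rintro r ⟨v, rfl⟩
    have habs : ∀ i, |(v : Euc n) i| ≤ 1 := fun i => (abs_apply_le_norm _ i).trans v.2.le
    have : -(∑ i, ∑ j, |M i j|) ≤ ∑ i, ∑ j, (v : Euc n) i * M i j * (v : Euc n) j := by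
      rw [← Finset.sum_neg_distrib]
      refine Finset.sum_le_sum fun i _ => ?_
      rw [← Finset.sum_neg_distrib]
      refine Finset.sum_le_sum fun j _ => ?_
      have h1 : |(v : Euc n) i * M i j * (v : Euc n) j| ≤ |M i j| := by
        rw [abs_mul, abs_mul]
        calc |(v : Euc n) i| * |M i j| * |(v : Euc n) j|
            ≤ 1 * |M i j| * 1 :=
              mul_le_mul (mul_le_mul (habs i) le_rfl (abs_nonneg _) zero_le_one)
                (habs j) (abs_nonneg _) (by positivity)
          _ = |M i j| := by ring
      linarith [neg_abs_le ((v : Euc n) i * M i j * (v : Euc n) j)]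
    exact this
  exact ciInf_le hbdd ⟨u, hu⟩

lemma lamMin_mul_le (M : Matrix (Fin n) (Fin n) ℝ) (e : Euc n) :
    lamMin M * ‖e‖ ^ 2 ≤ quadForm M e := by
  rcases eq_or_ne e 0 with rfl | hne
  · simp [quadForm]
  · have hne' : ‖e‖ ≠ 0 := norm_ne_zero_iff.mpr hne
    set u : Euc n := ‖e‖⁻¹ • e with hu_def
    have hu : ‖u‖ = 1 := by
      rw [hu_def, norm_smul, Real.norm_eq_abs, abs_inv, abs_norm]
      field_simp
    have h1 : lamMin M ≤ quadForm M u := lamMin_le M u hu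
    have h2 : quadForm M u = (‖e‖⁻¹) ^ 2 * quadForm M e := quadForm_smul M _ e
    have h3 : quadForm M e = ‖e‖ ^ 2 * quadForm M u := by
      rw [h2]; field_simp
    rw [h3]
    have := mul_le_mul_of_nonneg_left h1 (sq_nonneg ‖e‖)
    linarith

lemma sgn_of_nonneg {t : ℝ} (h : 0 ≤ t) : sgn t = 1 := if_pos h

lemma sgn_of_neg {t : ℝ} (h : t < 0) : sgn t = -1 := if_neg (not_le.mpr h)

lemma measurable_sgn : Measurable sgn := by
  unfold sgn
  exact Measurable.ite (measurableSet_le measurable_const measurable_id)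
    measurable_const measurable_const

lemma continuous_inner_right (c : Euc n) : Continuous fun a : Euc n => ⟪a, c⟫ :=
  continuous_id.inner continuous_const

lemma measurable_wedge (x z : Euc n) : MeasurableSet (wedge x z) := by
  have h1 : MeasurableSet (Metric.sphere (0 : Euc n) 1) :=
    Metric.isClosed_sphere.measurableSet
  have h2 : MeasurableSet {v : Euc n | sgn ⟪v, x⟫ = sgn ⟪v, z⟫} :=
    measurableSet_eq_fun (measurable_sgn.comp (continuous_inner_right x).measurable)
      (measurable_sgn.comp (continuous_inner_right z).measurable)
  have heq : wedge x z = Metric.sphere (0 : Euc n) 1 ∩ {v | sgn ⟪v, x⟫ = sgn ⟪v, z⟫}ᶜ := rfl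
  rw [heq]
  exact h1.inter h2.compl

lemma key_pointwise (x z a : Euc n) (ha : a ∈ Metric.sphere (0 : Euc n) 1) :
    ‖kacStep x a z - x‖ ^ 2 ≤
      ‖z - x‖ ^ 2 - ⟪a, z - x⟫ ^ 2 +
        4 * Set.indicator (wedge x z) (fun v => ⟪v, z - x⟫ ^ 2) a := by
  have hna : ‖a‖ = 1 := by simpa using ha
  set η := sgn ⟪a, z⟫ * |⟪a, x⟫| - ⟪a, z⟫ with hη
  have hstep : kacStep x a z - x = (z - x) + η • a := by
    unfold kacStep; rw [← hη]; abel
  have hexp : ‖kacStep x a z - x‖ ^ 2 = ‖z - x‖ ^ 2 + 2 * (η * ⟪a, z - x⟫) + η ^ 2 := by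
    rw [hstep, norm_add_sq_real, real_inner_smul_right, real_inner_comm, norm_smul, hna,
      Real.norm_eq_abs]
    ring_nf
    rw [sq_abs]
  have hinner : ⟪a, z - x⟫ = ⟪a, z⟫ - ⟪a, x⟫ := inner_sub_right a z x
  by_cases hsg : sgn ⟪a, x⟫ = sgn ⟪a, z⟫
  · have hW : a ∉ wedge x z := fun h => h.2 hsg
    have hval : sgn ⟪a, z⟫ * |⟪a, x⟫| = ⟪a, x⟫ := by
      rw [← hsg]
      rcases le_or_gt 0 ⟪a, x⟫ with h | h
      · rw [sgn_of_nonneg h, abs_of_nonneg h, one_mul]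
      · rw [sgn_of_neg h, abs_of_neg h]; ring
    rw [hexp, Set.indicator_of_notMem hW, hinner]
    have hη' : η = ⟪a, x⟫ - ⟪a, z⟫ := by rw [hη, hval]
    rw [hη']
    nlinarith [sq_nonneg (⟪a, z⟫ - ⟪a, x⟫)]
  · have hW : a ∈ wedge x z := ⟨ha, hsg⟩
    have hprod : ⟪a, x⟫ * ⟪a, z⟫ ≤ 0 := by
      rcases le_or_gt 0 ⟪a, x⟫ with hp | hp <;> rcases le_or_gt 0 ⟪a, z⟫ with hq | hq
      · rw [sgn_of_nonneg hp, sgn_of_nonneg hq] at hsg; exact absurd rfl hsg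
      · exact mul_nonpos_of_nonneg_of_nonpos hp hq.le
      · exact mul_nonpos_of_nonpos_of_nonneg hp.le hq
      · rw [sgn_of_neg hp, sgn_of_neg hq] at hsg; exact absurd rfl hsg
    have hval : sgn ⟪a, z⟫ * |⟪a, x⟫| = -⟪a, x⟫ := by
      rcases le_or_gt 0 ⟪a, x⟫ with hp | hp <;> rcases le_or_gt 0 ⟪a, z⟫ with hq | hq
      · rw [sgn_of_nonneg hp, sgn_of_nonneg hq] at hsg; exact absurd rfl hsg
      · rw [sgn_of_neg hq, abs_of_nonneg hp]; ring
      · rw [sgn_of_nonneg hq, abs_of_neg hp]; ring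
      · rw [sgn_of_neg hp, sgn_of_neg hq] at hsg; exact absurd rfl hsg
    rw [hexp, Set.indicator_of_mem hW, hinner]
    have hη' : η = -⟪a, x⟫ - ⟪a, z⟫ := by rw [hη, hval]
    rw [hη']
    nlinarith [hprod]

lemma integral_inner_sq (ν : Measure (Euc n)) (e : Euc n)
    (hint : ∀ i j, Integrable (fun a : Euc n => a i * a j) ν) :
    ∫ a, ⟪a, e⟫ ^ 2 ∂ν = ∑ i, ∑ j, e i * (∫ a, a i * a j ∂ν) * e j := by
  have hpt : ∀ a : Euc n, ⟪a, e⟫ ^ 2 = ∑ i, ∑ j, e i * (a i * a j) * e j := by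
    intro a
    rw [inner_euc, sq, Finset.sum_mul_sum]
    exact Finset.sum_congr rfl fun i _ => Finset.sum_congr rfl fun j _ => by ring
  simp_rw [hpt]
  rw [integral_finset_sum _ (fun i _ => integrable_finset_sum _
    (fun j _ => ((hint i j).const_mul (e i)).mul_const (e j)))]
  refine Finset.sum_congr rfl fun i _ => ?_
  rw [integral_finset_sum _ (fun j _ => ((hint i j).const_mul (e i)).mul_const (e j))]
  refine Finset.sum_congr rfl fun j _ => ?_
  rw [integral_mul_const, integral_const_mul]

end Aux

/-- **Lemma (Expected decrement).** Fix `x, z ∈ ℝⁿ` and a probability measure `μ`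
on the unit sphere `S^{n−1}`, and let `P = P_μ` be the generalized Kaczmarz
projection with respect to `μ`. Then
`E‖Pz − x‖² ≤ [1 − λ_min(E[aaᵀ] − 4 E[aaᵀ 1_{W_{x,z}}(a)])] ‖z − x‖²`. -/
theorem expected_decrement {n : ℕ} (x z : Euc n) (μ : Measure (Euc n))
    [IsProbabilityMeasure μ] (hsupp : ∀ᵐ a ∂μ, a ∈ Metric.sphere (0 : Euc n) 1) :
    ∫ a, ‖kacStep x a z - x‖ ^ 2 ∂μ ≤
      (1 - lamMin (covMat μ - (4 : ℝ) • covMatOn μ (wedge x z))) * ‖z - x‖ ^ 2 := by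
  set e := z - x with he
  set W := wedge x z with hWdef
  have hWm : MeasurableSet W := measurable_wedge x z
  have habs_inner : ∀ᵐ a ∂μ, |⟪a, e⟫| ≤ ‖e‖ := by
    filter_upwards [hsupp] with a ha
    have hna : ‖a‖ = 1 := by simpa using ha
    calc |⟪a, e⟫| ≤ ‖a‖ * ‖e‖ := abs_real_inner_le_norm a e
      _ = ‖e‖ := by rw [hna, one_mul]
  have hg_meas : Measurable fun a : Euc n => ⟪a, e⟫ ^ 2 :=
    ((continuous_inner_right e).pow 2).measurable
  have hg_int : Integrable (fun a : Euc n => ⟪a, e⟫ ^ 2) μ := by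
    refine Integrable.mono' (integrable_const (‖e‖ ^ 2)) hg_meas.aestronglyMeasurable ?_
    filter_upwards [habs_inner] with a ha
    rw [Real.norm_eq_abs, abs_pow]
    exact pow_le_pow_left₀ (abs_nonneg _) ha 2
  have hind_int : Integrable (W.indicator fun a : Euc n => ⟪a, e⟫ ^ 2) μ :=
    hg_int.indicator hWm
  have hf_int : Integrable (fun a : Euc n =>
      ‖e‖ ^ 2 - ⟪a, e⟫ ^ 2 + 4 * W.indicator (fun v => ⟪v, e⟫ ^ 2) a) μ :=
    ((integrable_const _).sub hg_int).add (hind_int.const_mul 4)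
  have hk_meas : Measurable fun a : Euc n => ‖kacStep x a z - x‖ ^ 2 := by
    have hmk : Measurable fun a : Euc n => kacStep x a z := by
      unfold kacStep
      exact measurable_const.add
        ((((measurable_sgn.comp (continuous_inner_right z).measurable).mul
          (continuous_inner_right x).abs.measurable).sub
          (continuous_inner_right z).measurable).smul measurable_id)
    exact ((hmk.sub measurable_const).norm).pow_const 2
  have hkey : ∀ᵐ a ∂μ, ‖kacStep x a z - x‖ ^ 2 ≤
      ‖e‖ ^ 2 - ⟪a, e⟫ ^ 2 + 4 * W.indicator (fun v => ⟪v, e⟫ ^ 2) a := by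
    filter_upwards [hsupp] with a ha
    exact key_pointwise x z a ha
  have hk_int : Integrable (fun a : Euc n => ‖kacStep x a z - x‖ ^ 2) μ := by
    refine Integrable.mono' (integrable_const (5 * ‖e‖ ^ 2))
      hk_meas.aestronglyMeasurable ?_
    filter_upwards [hkey, habs_inner] with a ha hai
    rw [Real.norm_eq_abs, abs_of_nonneg (by positivity)]
    have hsq : ⟪a, e⟫ ^ 2 ≤ ‖e‖ ^ 2 := by
      rw [← sq_abs ⟪a, e⟫]
      exact pow_le_pow_left₀ (abs_nonneg _) hai 2
    have hind : W.indicator (fun v => ⟪v, e⟫ ^ 2) a ≤ ‖e‖ ^ 2 := by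
      rcases Set.indicator_eq_zero_or_self W (fun v => ⟪v, e⟫ ^ 2) a with h | h <;>
        rw [h]
      · positivity
      · exact hsq
    linarith [sq_nonneg ⟪a, e⟫]
  have hle : ∫ a, ‖kacStep x a z - x‖ ^ 2 ∂μ ≤
      ∫ a, (‖e‖ ^ 2 - ⟪a, e⟫ ^ 2 + 4 * W.indicator (fun v => ⟪v, e⟫ ^ 2) a) ∂μ :=
    integral_mono_ae hk_int hf_int hkey
  have hij_int : ∀ i j, Integrable (fun a : Euc n => a i * a j) μ := by
    intro i j
    have hm : Measurable fun a : Euc n => a i * a j := by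
      have : ∀ k : Fin n, Measurable fun a : Euc n => a k := fun k =>
        (EuclideanSpace.proj (𝕜 := ℝ) k).continuous.measurable
      exact (this i).mul (this j)
    refine Integrable.mono' (integrable_const 1) hm.aestronglyMeasurable ?_
    filter_upwards [hsupp] with a ha
    have hna : ‖a‖ = 1 := by simpa using ha
    rw [Real.norm_eq_abs, abs_mul]
    calc |a i| * |a j| ≤ ‖a‖ * ‖a‖ :=
        mul_le_mul (abs_apply_le_norm a i) (abs_apply_le_norm a j) (abs_nonneg _)
          (norm_nonneg _)
      _ = 1 := by rw [hna]; ring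
  have hcov : ∫ a, ⟪a, e⟫ ^ 2 ∂μ = quadForm (covMat μ) e := by
    rw [integral_inner_sq μ e hij_int]; rfl
  have hcovOn : ∫ a in W, ⟪a, e⟫ ^ 2 ∂μ = quadForm (covMatOn μ W) e := by
    rw [integral_inner_sq (μ.restrict W) e (fun i j => (hij_int i j).restrict)]; rfl
  have hI1 : ∫ a, (‖e‖ ^ 2 - ⟪a, e⟫ ^ 2) ∂μ = ‖e‖ ^ 2 - quadForm (covMat μ) e := by
    rw [integral_sub (integrable_const (‖e‖ ^ 2)) hg_int, integral_const, hcov]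
    simp
  have hI2 : ∫ a, 4 * W.indicator (fun v => ⟪v, e⟫ ^ 2) a ∂μ
      = 4 * quadForm (covMatOn μ W) e := by
    rw [integral_const_mul, integral_indicator hWm, hcovOn]
  have hsplit : ∫ a, (‖e‖ ^ 2 - ⟪a, e⟫ ^ 2 + 4 * W.indicator (fun v => ⟪v, e⟫ ^ 2) a) ∂μ
      = ‖e‖ ^ 2 - quadForm (covMat μ) e + 4 * quadForm (covMatOn μ W) e := by
    have h1 : Integrable (fun a : Euc n => ‖e‖ ^ 2 - ⟪a, e⟫ ^ 2) μ :=
      (integrable_const _).sub hg_int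
    have h2 : Integrable (fun a : Euc n => 4 * W.indicator (fun v => ⟪v, e⟫ ^ 2) a) μ :=
      hind_int.const_mul 4
    rw [integral_add h1 h2, hI1, hI2]
  set M := covMat μ - (4 : ℝ) • covMatOn μ W with hM
  have hqM : quadForm M e = quadForm (covMat μ) e - 4 * quadForm (covMatOn μ W) e :=
    quadForm_sub_smul _ _ _ _
  have hlam : lamMin M * ‖e‖ ^ 2 ≤ quadForm M e := lamMin_mul_le M e
  calc ∫ a, ‖kacStep x a z - x‖ ^ 2 ∂μ
      ≤ ‖e‖ ^ 2 - quadForm (covMat μ) e + 4 * quadForm (covMatOn μ W) e := by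
        rw [← hsplit]; exact hle
    _ = ‖e‖ ^ 2 - quadForm M e := by rw [hqM]; ring
    _ ≤ ‖e‖ ^ 2 - lamMin M * ‖e‖ ^ 2 := by linarith
    _ = (1 - lamMin M) * ‖e‖ ^ 2 := by ring
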